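/- Assume reg(l) < α(l) for every l ∈ 𝔏 and ν ∉ {|n| : n ∈ ℕ^d}. Then every β ∈ N_min satisfies |β| > ν − η, and every β ∈ populated ∪ N_min satisfies |β| ≥ min(ν, 0) − η. -/
import Mathlib


open scoped Classical

noncomputable section

/-- The set of `d`-tuples of natural numbers, `ℕ^d`. -/
abbrev Nd (d : ℕ) : Type := Fin d → ℕ

/-- Multi-indices over `ℕ^d`: finitely supported functions `ℕ^d → ℕ`. -/
abbrev MNd (d : ℕ) : Type := Nd d →₀ ℕ

/-- The coordinate set `coord = (𝔏 × M(ℕ^d)) ⊔ ℕ^d`, where `𝔏 = 𝔏⁻ ∪ {0}` is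
modelled as `Option Lm` (with `none` playing the role of the element `0`). -/
abbrev Coord (Lm : Type) (d : ℕ) : Type := (Option Lm × MNd d) ⊕ Nd d

/-- Multi-indices over `coord`. -/
abbrev MCoord (Lm : Type) (d : ℕ) : Type := Coord Lm d →₀ ℕ

variable {Lm : Type} {d : ℕ}

/-- Length `ℓ(m)` of a multi-index. -/
def mlen {I : Type} (m : I →₀ ℕ) : ℕ := m.sum fun _ v => v

/-- The `i`-th unit vector of `ℕ^d`. -/
def unitNd (i : Fin d) : Nd d := Pi.single i 1

/-- The coefficient `(z^{γ'} D^{(n')})_β^γ`. -/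
def coefZD (γ' : MCoord Lm d) (n' : Nd d) (β γ : MCoord Lm d) : ℝ :=
  (γ.sum fun x v =>
    match x with
    | Sum.inl (l, k) =>
        (v : ℝ) * ((k n' : ℝ) + 1) *
          (if β + Finsupp.single (Sum.inl (l, k)) 1 =
              γ + Finsupp.single (Sum.inl (l, k + Finsupp.single n' 1)) 1 + γ'
           then 1 else 0)
    | Sum.inr _ => 0) +
  ((γ (Sum.inr n') : ℝ) *
    (if β + Finsupp.single (Sum.inr n') 1 = γ + γ' then 1 else 0))

/-- The coefficient `(D^{(n')})_β^γ`. -/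
def coefD (n' : Nd d) (β γ : MCoord Lm d) : ℝ := coefZD 0 n' β γ

/-- The coefficient `(∂_i)_β^γ`. -/
def coefPartial (i : Fin d) (β γ : MCoord Lm d) : ℝ :=
  ∑ᶠ n : Nd d,
    ((n i : ℝ) + 1) * coefZD (Finsupp.single (Sum.inr (n + unitNd i)) 1) n β γ

/-- `[β]`. -/
def brkt (β : MCoord Lm d) : ℤ :=
  β.sum fun x v =>
    match x with
    | Sum.inl (_, k) => (1 - (mlen k : ℤ)) * (v : ℤ)
    | Sum.inr _ => (v : ℤ)

/-- Noise homogeneity `⟦β⟧`. -/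
def nh (β : MCoord Lm d) : ℕ :=
  β.sum fun x v =>
    match x with
    | Sum.inl (some _, _) => v
    | Sum.inl (none, _) => 0
    | Sum.inr _ => 0

/-- Scaled degree `|n|` of `n ∈ ℕ^d`. -/
def snorm (s : Fin d → ℝ) (n : Nd d) : ℝ := ∑ i, s i * (n i : ℝ)

/-- A subcritical pair `(l,k)`. -/
def Subcritical {L : Type} (s : Fin d → ℝ) (η : ℝ) (reg : L → ℝ) (ν : ℝ)
    (l : L) (k : MNd d) : Prop :=
  ν < η + reg l ∧
  ∀ k' : MNd d, 0 < k' → k' ≤ k →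
    ν < η + (k'.sum fun n v => (ν - snorm s n) * (v : ℝ)) ∧
    ν < η + reg l + (k'.sum fun n v => (ν - snorm s n) * (v : ℝ))

/-- A subcritical multi-index. -/
def SubcriticalM (s : Fin d → ℝ) (η : ℝ) (reg : Option Lm → ℝ) (ν : ℝ)
    (β : MCoord Lm d) : Prop :=
  ∀ (l : Option Lm) (k : MNd d), β (Sum.inl (l, k)) ≠ 0 → Subcritical s η reg ν l k

/-- Homogeneity `|β|`. -/
def homg (s : Fin d → ℝ) (η : ℝ) (α : Option Lm → ℝ) (β : MCoord Lm d) : ℝ :=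
  β.sum fun x v =>
    match x with
    | Sum.inl (l, k) =>
        (α l + k.sum fun n v' => (η - snorm s n) * (v' : ℝ)) * (v : ℝ)
    | Sum.inr n => (snorm s n - η) * (v : ℝ)

/-- The set `N_min`. -/
def Nmin (s : Fin d → ℝ) (η : ℝ) (reg : Option Lm → ℝ) (ν : ℝ) :
    Set (MCoord Lm d) :=
  {β | brkt β = 1 ∧ SubcriticalM s η reg ν β ∧
       ∀ n : Nd d, snorm s n < ν → β (Sum.inr n) = 0}

/-- The set `N`. -/
def NSet (s : Fin d → ℝ) (η : ℝ) (reg : Option Lm → ℝ) (ν : ℝ) :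
    Set (MCoord Lm d) :=
  {β | β ∈ Nmin s η reg ν ∧ 0 < nh β}

/-- The purely polynomial set `P = {e_n}`. -/
def PolySet : Set (MCoord Lm d) :=
  {β | ∃ n : Nd d, β = Finsupp.single (Sum.inr n) 1}

/-- `populated = P ∪ N`. -/
def Populated (s : Fin d → ℝ) (η : ℝ) (reg : Option Lm → ℝ) (ν : ℝ) :
    Set (MCoord Lm d) :=
  PolySet ∪ NSet s η reg ν

/-- The subcritical coefficient `(z^{γ'} D^{(n')})^{sc}_β^γ`. -/
def coefZDsc (s : Fin d → ℝ) (η : ℝ) (reg : Option Lm → ℝ) (ν : ℝ)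
    (γ' : MCoord Lm d) (n' : Nd d) (β γ : MCoord Lm d) : ℝ :=
  (γ.sum fun x v =>
    match x with
    | Sum.inl (l, k) =>
        if Subcritical s η reg ν l (k + Finsupp.single n' 1) then
          (v : ℝ) * ((k n' : ℝ) + 1) *
            (if β + Finsupp.single (Sum.inl (l, k)) 1 =
                γ + Finsupp.single (Sum.inl (l, k + Finsupp.single n' 1)) 1 + γ'
             then 1 else 0)
        else 0
    | Sum.inr _ => 0) +
  ((γ (Sum.inr n') : ℝ) *
    (if β + Finsupp.single (Sum.inr n') 1 = γ + γ' then 1 else 0))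

/-- The subcritical coefficient `(∂_i)^{sc}_β^γ`. -/
def coefPartialSc (s : Fin d → ℝ) (η : ℝ) (reg : Option Lm → ℝ) (ν : ℝ)
    (i : Fin d) (β γ : MCoord Lm d) : ℝ :=
  ∑ᶠ n : Nd d,
    ((n i : ℝ) + 1) *
      coefZDsc s η reg ν (Finsupp.single (Sum.inr (n + unitNd i)) 1) n β γ

/-- `⌊β⌋ := Σ_n |n|·β(n)`. -/
def polydeg (s : Fin d → ℝ) (β : MCoord Lm d) : ℝ :=
  β.sum fun x v =>
    match x with
    | Sum.inl _ => 0
    | Sum.inr n => snorm s n * (v : ℝ)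

/-- `Σ_n (|n| − ν)·β(n)`. -/
def polyexcess (s : Fin d → ℝ) (ν : ℝ) (β : MCoord Lm d) : ℝ :=
  β.sum fun x v =>
    match x with
    | Sum.inl _ => 0
    | Sum.inr n => (snorm s n - ν) * (v : ℝ)

/-- `|β|_≺ := λ₁·ℓ(β) + λ₂·⟦β⟧ + λ₃·⌊β⌋`. -/
def ordPrec (s : Fin d → ℝ) (lam1 lam2 lam3 : ℝ) (β : MCoord Lm d) : ℝ :=
  lam1 * (mlen β : ℝ) + lam2 * (nh β : ℝ) + lam3 * polydeg s β

/-- Key consequence of subcriticality. -/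
lemma key_subcrit {Lm : Type} {d : ℕ} (s : Fin d → ℝ) (η : ℝ)
    (α reg : Option Lm → ℝ) (ν : ℝ) (h1 : ∀ l : Option Lm, reg l < α l)
    (l : Option Lm) (k : MNd d) (hsub : Subcritical s η reg ν l k) :
    ν < η + α l + (k.sum fun n v => (ν - snorm s n) * (v : ℝ)) := by
  rcases eq_or_ne k 0 with rfl | hk
  · have := hsub.1
    have := h1 l
    simp only [Finsupp.sum_zero_index]
    linarith
  · have hkpos : 0 < k := by
      exact lt_of_le_of_ne bot_le (Ne.symm hk)
    have := (hsub.2 k hkpos le_rfl).2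
    have := h1 l
    linarith

/-- Cast of the bracket. -/
lemma brkt_cast {Lm : Type} {d : ℕ} (β : MCoord Lm d) :
    ((brkt β : ℤ) : ℝ) = ∑ x ∈ β.support,
      (match x with
       | Sum.inl (_, k) => (1 - (mlen k : ℝ)) * (β x : ℝ)
       | Sum.inr _ => (β x : ℝ)) := by
  rw [brkt, Finsupp.sum, Int.cast_sum]
  refine Finset.sum_congr rfl fun x _ => ?_
  rcases x with ⟨l, k⟩ | n <;> push_cast <;> ring

/-- Combine the inner sums over `k`. -/
lemma inner_sum_eq {d : ℕ} (s : Fin d → ℝ) (η ν : ℝ) (k : MNd d) :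
    (k.sum fun n v => (ν - snorm s n) * (v : ℝ)) =
      (k.sum fun n v => (η - snorm s n) * (v : ℝ)) + (ν - η) * (mlen k : ℝ) := by
  rw [Finsupp.sum, Finsupp.sum, mlen, Finsupp.sum]
  push_cast
  rw [Finset.mul_sum, ← Finset.sum_add_distrib]
  exact Finset.sum_congr rfl fun n _ => by ring

/-- The main decomposition of `|β| - (ν - η)[β]`. -/
lemma homg_sub_brkt {Lm : Type} {d : ℕ} (s : Fin d → ℝ) (η : ℝ)
    (α : Option Lm → ℝ) (ν : ℝ) (β : MCoord Lm d) :
    homg s η α β - (ν - η) * ((brkt β : ℤ) : ℝ) =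
      ∑ x ∈ β.support,
        (match x with
         | Sum.inl (l, k) =>
             (α l + η - ν + k.sum fun n v => (ν - snorm s n) * (v : ℝ)) * (β x : ℝ)
         | Sum.inr n => (snorm s n - ν) * (β x : ℝ)) := by
  rw [homg, Finsupp.sum, brkt_cast, Finset.mul_sum, ← Finset.sum_sub_distrib]
  refine Finset.sum_congr rfl fun x _ => ?_
  rcases x with ⟨l, k⟩ | n
  · show (α l + k.sum fun n v' => (η - snorm s n) * (v' : ℝ)) * (β _ : ℝ) -
      (ν - η) * ((1 - (mlen k : ℝ)) * (β _ : ℝ)) =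
      (α l + η - ν + k.sum fun n v => (ν - snorm s n) * (v : ℝ)) * (β _ : ℝ)
    rw [inner_sum_eq s η ν k]
    ring
  · show (snorm s n - η) * (β _ : ℝ) - (ν - η) * (β _ : ℝ) =
      (snorm s n - ν) * (β _ : ℝ)
    ring

lemma snorm_nonneg {d : ℕ} (s : Fin d → ℝ) (hs : ∀ i, 1 ≤ s i) (n : Nd d) :
    0 ≤ snorm s n := by
  refine Finset.sum_nonneg fun i _ => ?_
  have := hs i
  positivity

theorem stmt10 {Lm : Type} [Fintype Lm] {d : ℕ} (hd : 1 ≤ d)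
    (s : Fin d → ℝ) (hs : ∀ i, 1 ≤ s i) (η : ℝ)
    (α reg : Option Lm → ℝ) (ν : ℝ)
    (h1 : ∀ l : Option Lm, reg l < α l)
    (h2 : ∀ n : Nd d, snorm s n ≠ ν) :
    (∀ β ∈ Nmin (Lm := Lm) (d := d) s η reg ν, ν - η < homg s η α β) ∧
    (∀ β ∈ Populated (Lm := Lm) (d := d) s η reg ν ∪ Nmin s η reg ν,
      min ν 0 - η ≤ homg s η α β) := by
  have part1 : ∀ β ∈ Nmin (Lm := Lm) (d := d) s η reg ν, ν - η < homg s η α β := by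
    intro β hβ
    obtain ⟨hb, hsc, hpoly⟩ := hβ
    have hne : β.support.Nonempty := by
      rcases Finset.eq_empty_or_nonempty β.support with h | h
      · exfalso
        have : β = 0 := Finsupp.support_eq_empty.mp h
        rw [this] at hb
        simp [brkt] at hb
      · exact h
    have hpos : 0 < homg s η α β - (ν - η) * ((brkt β : ℤ) : ℝ) := by
      rw [homg_sub_brkt]
      refine Finset.sum_pos (fun x hx => ?_) hne
      have hxne : β x ≠ 0 := Finsupp.mem_support_iff.mp hx
      have hvx : (0 : ℝ) < (β x : ℝ) := by positivity
      rcases x with ⟨l, k⟩ | n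
      · have hsub := hsc l k hxne
        have := key_subcrit s η α reg ν h1 l k hsub
        exact mul_pos (by linarith) hvx
      · have hge : ¬ snorm s n < ν := fun h => hxne (hpoly n h)
        have : ν < snorm s n := lt_of_le_of_ne (not_lt.mp hge) (Ne.symm (h2 n))
        exact mul_pos (by linarith) hvx
    rw [hb] at hpos
    push_cast at hpos
    linarith
  refine ⟨part1, ?_⟩
  intro β hβ
  have hmin : min ν 0 ≤ ν := min_le_left _ _
  have hmin0 : min ν 0 ≤ 0 := min_le_right _ _
  rcases hβ with (⟨n, rfl⟩ | ⟨hβ, _⟩) | hβ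
  · have : homg s η α (Finsupp.single (Sum.inr n) 1 : MCoord Lm d) = snorm s n - η := by
      rw [homg, Finsupp.sum_single_index] <;> simp
    rw [this]
    have := snorm_nonneg s hs n
    linarith
  · have := part1 β hβ
    linarith
  · have := part1 β hβ
    linarith


end
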